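/- Let H be a complex Hilbert space, let A : H →L[ℂ] H be a continuous linear self-adjoint operator, and let ψ ∈ H be a unit vector. Define the survival probability p(t) = |⟨ψ, exp(−itA)ψ⟩|², where exp denotes the exponential of continuous linear operators. Then, as t → 0, p(t) = 1 − t²·(⟨ψ, A²ψ⟩ − ⟨ψ, Aψ⟩²) + O(t³); i.e. the function t ↦ p(t) − (1 − t²·(re⟨ψ, A(Aψ)⟩ − (re⟨ψ, Aψ⟩)²)) is O(t³) in a neighbourhood of t = 0. -/

import Mathlib

open scoped InnerProductSpace
open Asymptotics

/-- Survival probability under unitary evolution generated by a bounded self-adjoint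
operator: `p(t) = 1 - t² (⟨ψ, A²ψ⟩ - ⟨ψ, Aψ⟩²) + O(t³)` as `t → 0`. -/
theorem survival_probability_isBigO
    {H : Type*} [NormedAddCommGroup H] [InnerProductSpace ℂ H] [CompleteSpace H]
    (A : H →L[ℂ] H) (hA : IsSelfAdjoint A) (ψ : H) (hψ : ‖ψ‖ = 1)
    (p : ℝ → ℝ)
    (hp : ∀ t : ℝ,
      p t = ‖⟪ψ, (NormedSpace.exp (((-Complex.I) * (t : ℂ)) • A)) ψ⟫_ℂ‖ ^ 2) :
    (fun t : ℝ =>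
        p t - (1 - t ^ 2 * ((⟪ψ, A (A ψ)⟫_ℂ).re - ((⟪ψ, A ψ⟫_ℂ).re) ^ 2)))
      =O[nhds 0] (fun t : ℝ => t ^ 3) := by
  classical
  set a : ℝ := (⟪ψ, A ψ⟫_ℂ).re with ha
  set b : ℝ := (⟪ψ, A (A ψ)⟫_ℂ).re with hb
  -- realness of the inner products
  have hψ2 : ⟪ψ, ψ⟫_ℂ = 1 := by
    rw [inner_self_eq_norm_sq_to_K, hψ]; norm_num
  have hαconj : (starRingEnd ℂ) ⟪ψ, A ψ⟫_ℂ = ⟪ψ, A ψ⟫_ℂ :=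
    (inner_conj_symm (A ψ) ψ).trans (hA.isSymmetric ψ ψ)
  have hα : ⟪ψ, A ψ⟫_ℂ = (a : ℂ) := (Complex.conj_eq_iff_re.mp hαconj).symm
  have hβconj : (starRingEnd ℂ) ⟪ψ, A (A ψ)⟫_ℂ = ⟪ψ, A (A ψ)⟫_ℂ :=
    (inner_conj_symm (A (A ψ)) ψ).trans
      ((hA.isSymmetric (A ψ) ψ).trans (hA.isSymmetric ψ (A ψ)))
  have hβ : ⟪ψ, A (A ψ)⟫_ℂ = (b : ℂ) := (Complex.conj_eq_iff_re.mp hβconj).symm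
  -- notation
  set x : ℝ → (H →L[ℂ] H) := fun t => ((-Complex.I) * (t : ℂ)) • A with hx
  set g : ℝ → ℂ := fun t => ⟪ψ, (NormedSpace.exp (x t)) ψ⟫_ℂ with hg
  set z : ℝ → ℂ := fun t => 1 - Complex.I * t * a - t ^ 2 / 2 * b with hz
  set e : ℝ → ℂ := fun t => g t - z t with he
  -- Step 1: operator Taylor remainder
  have hop : (fun t : ℝ => NormedSpace.exp (x t)
        - ((NormedSpace.expSeries ℂ (H →L[ℂ] H)).partialSum 3 (x t)))
      =O[nhds 0] (fun t : ℝ => t ^ 3) := by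
    have hser := (NormedSpace.exp_hasFPowerSeriesAt_zero (𝕂 := ℂ)
        (𝔸 := H →L[ℂ] H)).isBigO_sub_partialSum_pow 3
    have hxt : Filter.Tendsto x (nhds 0) (nhds 0) := by
      have : Continuous x := by
        rw [hx]
        exact ((continuous_const.mul Complex.continuous_ofReal).smul continuous_const :
          Continuous fun t : ℝ => ((-Complex.I) * (t : ℂ)) • A)
      simpa [hx] using this.tendsto 0
    have h1 := hser.comp_tendsto hxt
    simp only [zero_add, Function.comp_def] at h1
    refine h1.trans ?_
    have hnorm : (fun t : ℝ => ‖x t‖ ^ 3) = fun t : ℝ => ‖A‖ ^ 3 * |t| ^ 3 := by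
      funext t
      rw [hx, norm_smul]
      simp [mul_pow, Complex.norm_real]
      ring
    rw [hnorm]
    have h2 : (fun t : ℝ => |t| ^ 3) =O[nhds 0] (fun t : ℝ => t ^ 3) := by
      simp only [← abs_pow]
      exact (isBigO_refl (fun t : ℝ => t ^ 3) (nhds 0)).abs_left
    simpa using h2.const_mul_left (‖A‖ ^ 3)
  -- Step 2: the partial sum is exactly z t
  have hps : ∀ t : ℝ,
      ⟪ψ, (((NormedSpace.expSeries ℂ (H →L[ℂ] H)).partialSum 3 (x t)) ψ)⟫_ℂ = z t := by
    intro t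
    have hsum : (NormedSpace.expSeries ℂ (H →L[ℂ] H)).partialSum 3 (x t)
        = 1 + x t + (2 : ℂ)⁻¹ • (x t * x t) := by
      rw [FormalMultilinearSeries.partialSum]
      rw [Finset.sum_range_succ, Finset.sum_range_succ, Finset.sum_range_one]
      simp [NormedSpace.expSeries_apply_eq, pow_two]
    rw [hsum]
    simp only [ContinuousLinearMap.add_apply, ContinuousLinearMap.one_apply,
      ContinuousLinearMap.smul_apply, ContinuousLinearMap.mul_apply, hx,
      ContinuousLinearMap.map_smul, inner_add_right, inner_smul_right, hψ2, hα, hβ, hz]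
    linear_combination (2⁻¹ * (t : ℂ) ^ 2 * (b : ℂ)) * Complex.I_sq
  -- Step 3: e = O(t^3)
  have heO : e =O[nhds 0] (fun t : ℝ => t ^ 3) := by
    refine IsBigO.trans ?_ hop
    refine IsBigO.of_bound 1 ?_
    filter_upwards with t
    have : e t = ⟪ψ, ((NormedSpace.exp (x t)
        - (NormedSpace.expSeries ℂ (H →L[ℂ] H)).partialSum 3 (x t)) ψ)⟫_ℂ := by
      simp only [he, hg, ContinuousLinearMap.sub_apply, inner_sub_right, hps t]
    rw [this]
    calc ‖⟪ψ, ((NormedSpace.exp (x t)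
          - (NormedSpace.expSeries ℂ (H →L[ℂ] H)).partialSum 3 (x t)) ψ)⟫_ℂ‖
        ≤ ‖ψ‖ * ‖(NormedSpace.exp (x t)
          - (NormedSpace.expSeries ℂ (H →L[ℂ] H)).partialSum 3 (x t)) ψ‖ :=
          norm_inner_le_norm _ _
      _ ≤ ‖ψ‖ * (‖NormedSpace.exp (x t)
          - (NormedSpace.expSeries ℂ (H →L[ℂ] H)).partialSum 3 (x t)‖ * ‖ψ‖) := by
          gcongr
          exact ContinuousLinearMap.le_opNorm _ _
      _ = 1 * ‖NormedSpace.exp (x t)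
          - (NormedSpace.expSeries ℂ (H →L[ℂ] H)).partialSum 3 (x t)‖ := by
          rw [hψ]; ring
  -- Step 4: pointwise algebraic identity
  have hkey : ∀ t : ℝ, p t - (1 - t ^ 2 * (b - a ^ 2))
      = t ^ 4 * b ^ 2 / 4 + 2 * (z t * (starRingEnd ℂ) (e t)).re + Complex.normSq (e t) := by
    intro t
    have hgze : g t = z t + e t := by rw [he]; ring
    have : p t = Complex.normSq (z t + e t) := by
      rw [hp t, ← hgze, hg, hx, Complex.sq_norm]
    rw [this, Complex.normSq_add]
    have hzre : (z t).re = 1 - t ^ 2 / 2 * b := by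
      rw [hz]; simp [← Complex.ofReal_pow]
    have hzim : (z t).im = -(t * a) := by
      rw [hz]; simp [← Complex.ofReal_pow]
    have hnz : Complex.normSq (z t) = (1 - t ^ 2 / 2 * b) ^ 2 + (t * a) ^ 2 := by
      rw [Complex.normSq_apply, hzre, hzim]; ring
    rw [hnz]
    ring
  -- Step 5: each term is O(t^3)
  have h4 : (fun t : ℝ => t ^ 4 * b ^ 2 / 4) =O[nhds 0] (fun t : ℝ => t ^ 3) := by
    have : (fun t : ℝ => t ^ 4) =O[nhds 0] (fun t : ℝ => t ^ 3) := by
      refine IsBigO.of_bound 1 ?_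
      filter_upwards [Metric.ball_mem_nhds (0 : ℝ) one_pos] with t ht
      simp only [Metric.mem_ball, Real.dist_eq, sub_zero] at ht
      have h1 : |t| ≤ 1 := le_of_lt ht
      simp only [Real.norm_eq_abs, abs_pow, one_mul]
      calc |t| ^ 4 = |t| ^ 3 * |t| := by ring
        _ ≤ |t| ^ 3 * 1 := by gcongr
        _ = |t| ^ 3 := by ring
    calc (fun t : ℝ => t ^ 4 * b ^ 2 / 4) = fun t : ℝ => (b ^ 2 / 4) * t ^ 4 := by
          funext t; ring
      _ =O[nhds 0] (fun t : ℝ => t ^ 3) := by simpa using this.const_mul_left (b ^ 2 / 4)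
  have hzO : z =O[nhds 0] (fun _ : ℝ => (1 : ℝ)) := by
    have : Filter.Tendsto z (nhds 0) (nhds (z 0)) := by
      have : Continuous z := by
        rw [hz]
        exact ((continuous_const.sub ((continuous_const.mul
          Complex.continuous_ofReal).mul continuous_const)).sub
          (((Complex.continuous_ofReal.pow 2).div_const 2).mul continuous_const))
      exact this.tendsto 0
    exact this.isBigO_one ℝ
  have hconjO : (fun t : ℝ => (starRingEnd ℂ) (e t)) =O[nhds 0] (fun t : ℝ => t ^ 3) := by
    refine IsBigO.trans ?_ heO
    exact IsBigO.of_bound 1 (by filter_upwards with t; simp)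
  have hmid : (fun t : ℝ => 2 * (z t * (starRingEnd ℂ) (e t)).re)
      =O[nhds 0] (fun t : ℝ => t ^ 3) := by
    have hprod := hzO.mul hconjO
    simp only [one_mul] at hprod
    have hre : (fun t : ℝ => (z t * (starRingEnd ℂ) (e t)).re)
        =O[nhds 0] (fun t : ℝ => z t * (starRingEnd ℂ) (e t)) := by
      refine IsBigO.of_bound 1 ?_
      filter_upwards with t
      simpa using Complex.abs_re_le_norm (z t * (starRingEnd ℂ) (e t))
    simpa using (hre.trans hprod).const_mul_left 2
  have hnsq : (fun t : ℝ => Complex.normSq (e t)) =O[nhds 0] (fun t : ℝ => t ^ 3) := by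
    have h6 : (fun t : ℝ => Complex.normSq (e t)) =O[nhds 0] (fun t : ℝ => t ^ 3 * t ^ 3) := by
      have := heO.norm_left.mul heO.norm_left
      refine IsBigO.trans ?_ this
      refine IsBigO.of_bound 1 ?_
      filter_upwards with t
      simp [Complex.normSq_eq_norm_sq, pow_two, abs_mul]
    refine h6.trans ?_
    refine IsBigO.of_bound 1 ?_
    filter_upwards [Metric.ball_mem_nhds (0 : ℝ) one_pos] with t ht
    simp only [Metric.mem_ball, Real.dist_eq, sub_zero] at ht
    have h1 : |t| ≤ 1 := le_of_lt ht
    simp only [Real.norm_eq_abs, abs_mul, abs_pow, one_mul]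
    calc |t| ^ 3 * |t| ^ 3 ≤ 1 * |t| ^ 3 := by
          gcongr
          exact pow_le_one₀ (abs_nonneg t) h1
      _ = |t| ^ 3 := by ring
  -- conclude
  have : (fun t : ℝ => p t - (1 - t ^ 2 * (b - a ^ 2)))
      = fun t : ℝ => t ^ 4 * b ^ 2 / 4 + 2 * (z t * (starRingEnd ℂ) (e t)).re
          + Complex.normSq (e t) := funext hkey
  rw [show (fun t : ℝ => p t - (1 - t ^ 2 * ((⟪ψ, A (A ψ)⟫_ℂ).re - ((⟪ψ, A ψ⟫_ℂ).re) ^ 2)))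
      = fun t : ℝ => p t - (1 - t ^ 2 * (b - a ^ 2)) from rfl, this]
  exact (h4.add hmid).add hnsq
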